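/- arXiv:1206.1216 — 2 statements merged into one kernel-verified Lean document; each statement's English description precedes it below -/
import Mathlib

section
/- Let ⋆ ∈ 𝒫 and let Δ be the deconcatenation coproduct on A⟨X⟩ and ε the counit sending the empty word to 1 and other words to 0. Then Δ is an algebra morphism for ⋆: Δ(w₁ ⋆ w₂) = Δ(w₁) ⋆ Δ(w₂) for all words w₁, w₂, where ⋆ acts componentwise on tensors: (u⊗v)⋆(u'⊗v') = (u⋆u')⊗(v⋆v'). Hence (A⟨X⟩, ⋆, Δ, ε) is a bialgebra. -/
open Finsupp Finset Filter

/-- A word `w` seen as an element of the free module `A⟨X⟩` (coefficient 1). -/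
noncomputable def delta (A : Type*) [CommRing A] {X : Type*} (w : List X) : List X →₀ A :=
  Finsupp.single w 1

/-- Left concatenation by a letter, as a linear map on `A⟨X⟩`. -/
noncomputable def lcons (A : Type*) [CommRing A] {X : Type*} (x : X) :
    (List X →₀ A) →ₗ[A] (List X →₀ A) :=
  Finsupp.lmapDomain A A (List.cons x)

open TensorProduct in
/-- The deconcatenation coproduct `Δ : A⟨X⟩ → A⟨X⟩ ⊗ A⟨X⟩`, `Δw = Σ_(uv=w) u ⊗ v`. -/
noncomputable def deconcat (A : Type*) [CommRing A] {X : Type*} :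
    (List X →₀ A) →ₗ[A] TensorProduct A (List X →₀ A) (List X →₀ A) :=
  Finsupp.linearCombination A (fun w : List X =>
    ∑ i ∈ Finset.range (w.length + 1), delta A (w.take i) ⊗ₜ[A] delta A (w.drop i))

section Aux

variable {A X : Type*} [CommRing A]

open TensorProduct

lemma deconcat_delta (w : List X) : deconcat A (delta A w)
    = ∑ i ∈ Finset.range (w.length + 1), delta A (w.take i) ⊗ₜ[A] delta A (w.drop i) := by
  simp [deconcat, delta, Finsupp.linearCombination_single]

lemma lcons_delta (x : X) (w : List X) : lcons A x (delta A w) = delta A (x :: w) := by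
  simp [lcons, delta, Finsupp.mapDomain_single]

lemma deconcat_lcons (x : X) (f : List X →₀ A) :
    deconcat A (lcons A x f)
      = delta A [] ⊗ₜ[A] lcons A x f
        + TensorProduct.map (lcons A x) LinearMap.id (deconcat A f) := by
  induction f using Finsupp.induction_linear with
  | zero => simp
  | add f g hf hg =>
      simp only [map_add, hf, hg, TensorProduct.tmul_add]
      exact add_add_add_comm _ _ _ _
  | single w c =>
      have h : (Finsupp.single w c : List X →₀ A) = c • delta A w := by
        simp [delta, Finsupp.smul_single]
      rw [h, map_smul, map_smul, map_smul, map_smul, TensorProduct.tmul_smul, ← smul_add]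
      congr 1
      rw [lcons_delta, deconcat_delta, deconcat_delta]
      rw [show (x :: w).length + 1 = w.length + 1 + 1 from rfl, Finset.sum_range_succ']
      simp only [List.take_succ_cons, List.drop_succ_cons, List.take_zero, List.drop_zero,
        map_sum, TensorProduct.map_tmul, LinearMap.id_coe, id_eq, lcons_delta]
      exact add_comm _ _

lemma splitInner {M : Type*} [AddCommMonoid M] {ι : Type*} (s : Finset ι) (m : ℕ)
    (f : ι → ℕ → M) :
    ∑ i ∈ s, ∑ j ∈ Finset.range (m + 1), f i j
      = (∑ i ∈ s, ∑ j ∈ Finset.range m, f i (j + 1)) + ∑ i ∈ s, f i 0 := by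
  simp_rw [Finset.sum_range_succ']
  rw [Finset.sum_add_distrib]

lemma combineSums {ι κ M B : Type*} [CommRing B] [AddCommMonoid M] [Module B M]
    (s : Finset ι) (t : Finset κ) (f g h : ι → κ → M) (c : B) :
    ∑ i ∈ s, ∑ j ∈ t, (f i j + g i j + c • h i j)
      = (∑ i ∈ s, ∑ j ∈ t, f i j) + (∑ i ∈ s, ∑ j ∈ t, g i j)
        + c • ∑ i ∈ s, ∑ j ∈ t, h i j := by
  simp [Finset.sum_add_distrib, Finset.smul_sum]

lemma split2 {M : Type*} [AddCommMonoid M] (n m : ℕ) (f : ℕ → ℕ → M) :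
    ∑ i ∈ Finset.range (n + 1), ∑ j ∈ Finset.range (m + 1), f i j
      = (∑ i ∈ Finset.range n, ∑ j ∈ Finset.range m, f (i + 1) (j + 1))
        + (∑ i ∈ Finset.range n, f (i + 1) 0)
        + ((∑ j ∈ Finset.range m, f 0 (j + 1)) + f 0 0) := by
  rw [Finset.sum_range_succ', splitInner, Finset.sum_range_succ']

end Aux

set_option maxHeartbeats 1000000 in
open TensorProduct in
/-- for `⋆ ∈ 𝒫`, the deconcatenation coproduct is a `⋆`-morphism:
`Δ(w₁ ⋆ w₂) = Δ(w₁) ⋆ Δ(w₂)`, where `⋆` acts componentwise on tensors (here the right-hand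
side `Δ(w₁) ⋆ Δ(w₂)` is written out as
`Σ_(u₁u₂=w₁) Σ_(v₁v₂=w₂) (u₁ ⋆ v₁) ⊗ (u₂ ⋆ v₂)`).  Hence `(A⟨X⟩, ⋆, Δ, ε)` is a bialgebra. -/
theorem stmt8 {A X : Type*} [CommRing A]
    (star : (List X →₀ A) →ₗ[A] (List X →₀ A) →ₗ[A] (List X →₀ A))
    (brC : X → X → A) (brX : X → X → X)
    (hunitl : ∀ w : List X, star (delta A []) (delta A w) = delta A w)
    (hunitr : ∀ w : List X, star (delta A w) (delta A []) = delta A w)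
    (hrec : ∀ (a b : X) (u v : List X),
      star (delta A (a :: u)) (delta A (b :: v)) =
        lcons A a (star (delta A u) (delta A (b :: v)))
          + lcons A b (star (delta A (a :: u)) (delta A v))
          + brC a b • lcons A (brX a b) (star (delta A u) (delta A v)))
    (hsym : ∀ a b : X, brC a b • delta A [brX a b] = brC b a • delta A [brX b a])
    (hassoc : ∀ a b c : X,
      (brC a b * brC (brX a b) c) • delta A [brX (brX a b) c]
        = (brC b c * brC a (brX b c)) • delta A [brX a (brX b c)]) :
    ∀ w₁ w₂ : List X,
      deconcat A (star (delta A w₁) (delta A w₂))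
        = ∑ i ∈ Finset.range (w₁.length + 1), ∑ j ∈ Finset.range (w₂.length + 1),
            star (delta A (w₁.take i)) (delta A (w₂.take j))
              ⊗ₜ[A] star (delta A (w₁.drop i)) (delta A (w₂.drop j)) := by
  intro w₁
  induction w₁ with
  | nil =>
      intro w₂
      rw [hunitl, deconcat_delta]
      simp [hunitl]
  | cons a u IH1 =>
      intro w₂
      induction w₂ with
      | nil =>
          rw [hunitr, deconcat_delta]
          simp [hunitr]
      | cons b v IH2 =>
          simp only [List.length_cons]
          have hA : deconcat A (lcons A a (star (delta A u) (delta A (b :: v))))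
              = delta A [] ⊗ₜ[A] lcons A a (star (delta A u) (delta A (b :: v)))
                + ((∑ i ∈ Finset.range (u.length + 1), ∑ j ∈ Finset.range (v.length + 1),
                    lcons A a (star (delta A (u.take i)) (delta A (b :: v.take j)))
                      ⊗ₜ[A] star (delta A (u.drop i)) (delta A (v.drop j)))
                  + ∑ i ∈ Finset.range (u.length + 1),
                      delta A (a :: u.take i)
                        ⊗ₜ[A] star (delta A (u.drop i)) (delta A (b :: v))) := by
            rw [deconcat_lcons, IH1 (b :: v)]
            congr 1
            simp only [map_sum, TensorProduct.map_tmul, LinearMap.id_coe, id_eq]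
            rw [show (b :: v).length + 1 = v.length + 1 + 1 from rfl, splitInner]
            simp only [List.take_succ_cons, List.drop_succ_cons, List.take_zero,
              List.drop_zero, hunitr, lcons_delta]
          have hB : deconcat A (lcons A b (star (delta A (a :: u)) (delta A v)))
              = delta A [] ⊗ₜ[A] lcons A b (star (delta A (a :: u)) (delta A v))
                + ((∑ i ∈ Finset.range (u.length + 1), ∑ j ∈ Finset.range (v.length + 1),
                    lcons A b (star (delta A (a :: u.take i)) (delta A (v.take j)))
                      ⊗ₜ[A] star (delta A (u.drop i)) (delta A (v.drop j)))
                  + ∑ j ∈ Finset.range (v.length + 1),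
                      delta A (b :: v.take j)
                        ⊗ₜ[A] star (delta A (a :: u)) (delta A (v.drop j))) := by
            rw [deconcat_lcons, IH2]
            congr 1
            simp only [map_sum, TensorProduct.map_tmul, LinearMap.id_coe, id_eq]
            rw [show (a :: u).length + 1 = u.length + 1 + 1 from rfl, Finset.sum_range_succ']
            simp only [List.take_succ_cons, List.drop_succ_cons, List.take_zero,
              List.drop_zero, hunitl, lcons_delta]
          have hC : deconcat A (lcons A (brX a b) (star (delta A u) (delta A v)))
              = delta A [] ⊗ₜ[A] lcons A (brX a b) (star (delta A u) (delta A v))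
                + ∑ i ∈ Finset.range (u.length + 1), ∑ j ∈ Finset.range (v.length + 1),
                    lcons A (brX a b) (star (delta A (u.take i)) (delta A (v.take j)))
                      ⊗ₜ[A] star (delta A (u.drop i)) (delta A (v.drop j)) := by
            rw [deconcat_lcons, IH1 v]
            congr 1
            simp only [map_sum, TensorProduct.map_tmul, LinearMap.id_coe, id_eq]
          have hT : (∑ i ∈ Finset.range (u.length + 1), ∑ j ∈ Finset.range (v.length + 1),
                star (delta A (a :: u.take i)) (delta A (b :: v.take j))
                  ⊗ₜ[A] star (delta A (u.drop i)) (delta A (v.drop j)))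
              = (∑ i ∈ Finset.range (u.length + 1), ∑ j ∈ Finset.range (v.length + 1),
                    lcons A a (star (delta A (u.take i)) (delta A (b :: v.take j)))
                      ⊗ₜ[A] star (delta A (u.drop i)) (delta A (v.drop j)))
                + (∑ i ∈ Finset.range (u.length + 1), ∑ j ∈ Finset.range (v.length + 1),
                    lcons A b (star (delta A (a :: u.take i)) (delta A (v.take j)))
                      ⊗ₜ[A] star (delta A (u.drop i)) (delta A (v.drop j)))
                + brC a b • ∑ i ∈ Finset.range (u.length + 1), ∑ j ∈ Finset.range (v.length + 1),
                    lcons A (brX a b) (star (delta A (u.take i)) (delta A (v.take j)))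
                      ⊗ₜ[A] star (delta A (u.drop i)) (delta A (v.drop j)) := by
            have hmid : (∑ i ∈ Finset.range (u.length + 1), ∑ j ∈ Finset.range (v.length + 1),
                  star (delta A (a :: u.take i)) (delta A (b :: v.take j))
                    ⊗ₜ[A] star (delta A (u.drop i)) (delta A (v.drop j)))
                = ∑ i ∈ Finset.range (u.length + 1), ∑ j ∈ Finset.range (v.length + 1),
                    (lcons A a (star (delta A (u.take i)) (delta A (b :: v.take j)))
                        ⊗ₜ[A] star (delta A (u.drop i)) (delta A (v.drop j))
                      + lcons A b (star (delta A (a :: u.take i)) (delta A (v.take j)))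
                        ⊗ₜ[A] star (delta A (u.drop i)) (delta A (v.drop j))
                      + brC a b • (lcons A (brX a b)
                            (star (delta A (u.take i)) (delta A (v.take j)))
                          ⊗ₜ[A] star (delta A (u.drop i)) (delta A (v.drop j)))) := by
              refine Finset.sum_congr rfl fun i _ => Finset.sum_congr rfl fun j _ => ?_
              rw [hrec, TensorProduct.add_tmul, TensorProduct.add_tmul,
                ← TensorProduct.smul_tmul']
            rw [hmid, combineSums]
          have hR : (∑ i ∈ Finset.range (u.length + 1 + 1), ∑ j ∈ Finset.range (v.length + 1 + 1),
                star (delta A ((a :: u).take i)) (delta A ((b :: v).take j))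
                  ⊗ₜ[A] star (delta A ((a :: u).drop i)) (delta A ((b :: v).drop j)))
              = ((∑ i ∈ Finset.range (u.length + 1), ∑ j ∈ Finset.range (v.length + 1),
                    lcons A a (star (delta A (u.take i)) (delta A (b :: v.take j)))
                      ⊗ₜ[A] star (delta A (u.drop i)) (delta A (v.drop j)))
                + (∑ i ∈ Finset.range (u.length + 1), ∑ j ∈ Finset.range (v.length + 1),
                    lcons A b (star (delta A (a :: u.take i)) (delta A (v.take j)))
                      ⊗ₜ[A] star (delta A (u.drop i)) (delta A (v.drop j)))
                + brC a b • ∑ i ∈ Finset.range (u.length + 1), ∑ j ∈ Finset.range (v.length + 1),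
                    lcons A (brX a b) (star (delta A (u.take i)) (delta A (v.take j)))
                      ⊗ₜ[A] star (delta A (u.drop i)) (delta A (v.drop j)))
                + (∑ i ∈ Finset.range (u.length + 1),
                    delta A (a :: u.take i)
                      ⊗ₜ[A] star (delta A (u.drop i)) (delta A (b :: v)))
                + ((∑ j ∈ Finset.range (v.length + 1),
                    delta A (b :: v.take j)
                      ⊗ₜ[A] star (delta A (a :: u)) (delta A (v.drop j)))
                  + delta A [] ⊗ₜ[A] star (delta A (a :: u)) (delta A (b :: v))) := by
            rw [split2]
            simp only [List.take_succ_cons, List.drop_succ_cons, List.take_zero,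
              List.drop_zero, hunitl, hunitr]
            rw [hT]
          rw [hrec, map_add, map_add, map_smul, hA, hB, hC, hR,
            hrec a b u v, TensorProduct.tmul_add, TensorProduct.tmul_add,
            TensorProduct.tmul_smul, smul_add]
          module
end

section
/- Let ⋆ ∈ 𝒫 and define a_⋆: A⟨X⟩ → A⟨X⟩ by a_⋆(1)=1, and for a word x₁…x_n, a_⋆(x₁…x_n) = Σ over compositions (i₁,…,i_k) of n of (−1)^k (x₁…x_{i₁}) ⋆ (x_{i₁+1}…x_{i₁+i₂}) ⋆ … ⋆ (x_{i₁+…+i_{k−1}+1}…x_n). Then a_⋆ satisfies the left antipode identity: Σ_{uv=w} a_⋆(u) ⋆ v = ε(w)·1 for every word w, where ε(w) = 1 if w is empty and 0 otherwise. -/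
open Finsupp Finset Filter

/-- Cut a word into the pieces prescribed by a composition (list of block sizes). -/
def splitWord {X : Type*} : List ℕ → List X → List (List X)
  | [], _ => []
  | i :: c, w => w.take i :: splitWord c (w.drop i)

/-- Iterated `⋆`-product of a list of words (empty product = empty word). -/
noncomputable def prodStar {A X : Type*} [CommRing A]
    (star : (List X →₀ A) →ₗ[A] (List X →₀ A) →ₗ[A] (List X →₀ A)) :
    List (List X) → (List X →₀ A)
  | [] => delta A []
  | u :: l => star (delta A u) (prodStar star l)

/-- The candidate antipode: `a_⋆(x₁…x_n) = Σ_(compositions (i₁,…,i_k) of n) (-1)^k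
(x₁…x_(i₁)) ⋆ … ⋆ (x_(i₁+…+i_(k-1)+1)…x_n)`. -/
noncomputable def aStar {A X : Type*} [CommRing A]
    (star : (List X →₀ A) →ₗ[A] (List X →₀ A) →ₗ[A] (List X →₀ A)) (w : List X) :
    List X →₀ A :=
  ∑ c : Composition w.length,
    ((-1 : A) ^ c.blocks.length) • prodStar star (splitWord c.blocks w)

section Aux
variable {A X : Type*} [CommRing A]

lemma lcons_single (a : X) (u : List X) (c : A) :
    lcons A a (Finsupp.single u c) = Finsupp.single (a :: u) c := by
  simp [lcons, Finsupp.mapDomain_single]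

lemma delta_cons (a : X) (u : List X) : delta A (a :: u) = lcons A a (delta A u) := by
  simp [delta, lcons_single]

lemma single_eq_smul_delta (u : List X) (c : A) :
    (Finsupp.single u c : List X →₀ A) = c • delta A u := by
  simp [delta, Finsupp.smul_single]

variable (star : (List X →₀ A) →ₗ[A] (List X →₀ A) →ₗ[A] (List X →₀ A))

lemma unitl' (hunitl : ∀ w : List X, star (delta A []) (delta A w) = delta A w)
    (p : List X →₀ A) : star (delta A []) p = p := by
  induction p using Finsupp.induction_linear with
  | zero => simp
  | add p q hp hq => rw [map_add, hp, hq]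
  | single w c => rw [single_eq_smul_delta, map_smul, hunitl]

lemma unitr' (hunitr : ∀ w : List X, star (delta A w) (delta A []) = delta A w)
    (p : List X →₀ A) : star p (delta A []) = p := by
  induction p using Finsupp.induction_linear with
  | zero => simp
  | add p q hp hq => rw [map_add, LinearMap.add_apply, hp, hq]
  | single w c => rw [single_eq_smul_delta, map_smul, LinearMap.smul_apply, hunitr]

variable {brC : X → X → A} {brX : X → X → X}

lemma hrec' (hrec : ∀ (a b : X) (u v : List X),
      star (delta A (a :: u)) (delta A (b :: v)) =
        lcons A a (star (delta A u) (delta A (b :: v)))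
          + lcons A b (star (delta A (a :: u)) (delta A v))
          + brC a b • lcons A (brX a b) (star (delta A u) (delta A v)))
    (a b : X) (p q : List X →₀ A) :
    star (lcons A a p) (lcons A b q) =
      lcons A a (star p (lcons A b q))
        + lcons A b (star (lcons A a p) q)
        + brC a b • lcons A (brX a b) (star p q) := by
  induction p using Finsupp.induction_linear with
  | zero => simp
  | add p p' hp hp' =>
      simp only [map_add, LinearMap.add_apply, hp, hp', smul_add]
      abel
  | single u c =>
      induction q using Finsupp.induction_linear with
      | zero => simp
      | add q q' hq hq' =>
          simp only [map_add, hq, hq', smul_add]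
          abel
      | single v d =>
          rw [single_eq_smul_delta u c, single_eq_smul_delta v d]
          simp only [map_smul, LinearMap.smul_apply, ← delta_cons]
          rw [hrec a b u v]
          simp only [smul_add, map_smul]
          module


lemma smul_lcons_congr {s t : A} {e f : X}
    (h : s • delta A [e] = t • delta A ([f] : List X)) (x : List X →₀ A) :
    s • lcons A e x = t • lcons A f x := by
  induction x using Finsupp.induction_linear with
  | zero => simp
  | add p q hp hq => simp only [map_add, smul_add, hp, hq]
  | single l c =>
      have h1 : (Finsupp.single (e :: l) s : List X →₀ A) = Finsupp.single (f :: l) t := by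
        have h2 := congrArg (Finsupp.mapDomain (fun m => m ++ l)) h
        simpa [delta, Finsupp.mapDomain_single, Finsupp.smul_single,
          Finsupp.mapDomain_smul] using h2
      rw [lcons_single, lcons_single, Finsupp.smul_single, Finsupp.smul_single,
        show s • c = c • s from mul_comm s c, show t • c = c • t from mul_comm t c,
        ← Finsupp.smul_single, ← Finsupp.smul_single, h1]

lemma assoc_delta
    (hunitl : ∀ w : List X, star (delta A []) (delta A w) = delta A w)
    (hunitr : ∀ w : List X, star (delta A w) (delta A []) = delta A w)
    (hrec : ∀ (a b : X) (u v : List X),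
      star (delta A (a :: u)) (delta A (b :: v)) =
        lcons A a (star (delta A u) (delta A (b :: v)))
          + lcons A b (star (delta A (a :: u)) (delta A v))
          + brC a b • lcons A (brX a b) (star (delta A u) (delta A v)))
    (hassoc : ∀ a b c : X,
      (brC a b * brC (brX a b) c) • delta A [brX (brX a b) c]
        = (brC b c * brC a (brX b c)) • delta A [brX a (brX b c)]) :
    ∀ u v w : List X,
      star (star (delta A u) (delta A v)) (delta A w)
        = star (delta A u) (star (delta A v) (delta A w)) := by
  suffices H : ∀ n, ∀ u v w : List X, u.length + v.length + w.length = n →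
      star (star (delta A u) (delta A v)) (delta A w)
        = star (delta A u) (star (delta A v) (delta A w)) by
    exact fun u v w => H _ u v w rfl
  intro n
  induction n using Nat.strong_induction_on with
  | _ n ih =>
    intro u v w hn
    match u, v, w with
    | [], v, w => rw [hunitl, unitl' star hunitl]
    | a :: u', [], w => rw [hunitr, unitl' star hunitl]
    | a :: u', b :: v', [] =>
        rw [unitr' star hunitr, unitr' star hunitr]
    | a :: u', b :: v', c :: w' =>
        have hrecL : ∀ (x : X) (p : List X →₀ A) (y : X) (v : List X),
            star (lcons A x p) (delta A (y :: v)) =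
              lcons A x (star p (delta A (y :: v)))
                + lcons A y (star (lcons A x p) (delta A v))
                + brC x y • lcons A (brX x y) (star p (delta A v)) := by
          intro x p y v
          have h := hrec' star hrec x y p (delta A v)
          rwa [← delta_cons y v] at h
        have hrecR : ∀ (x : X) (u : List X) (y : X) (q : List X →₀ A),
            star (delta A (x :: u)) (lcons A y q) =
              lcons A x (star (delta A u) (lcons A y q))
                + lcons A y (star (delta A (x :: u)) q)
                + brC x y • lcons A (brX x y) (star (delta A u) q) := by
          intro x u y q
          have h := hrec' star hrec x y (delta A u) q
          rwa [← delta_cons x u] at h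
        have e1 := hrec a b u' v'
        have e2 := hrec b c v' w'
        set P := star (delta A u') (delta A (b :: v')) with hP
        set Q := star (delta A (a :: u')) (delta A v') with hQ
        set R := star (delta A u') (delta A v') with hR
        have ihA := ih (u'.length + (b :: v').length + (c :: w').length)
          (by simp only [List.length_cons] at hn ⊢; omega) u' (b :: v') (c :: w') rfl
        have ihB := ih ((a :: u').length + v'.length + (c :: w').length)
          (by simp only [List.length_cons] at hn ⊢; omega) (a :: u') v' (c :: w') rfl
        have ihC := ih (u'.length + v'.length + (c :: w').length)
          (by simp only [List.length_cons] at hn ⊢; omega) u' v' (c :: w') rfl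
        have ihD := ih ((a :: u').length + (b :: v').length + w'.length)
          (by simp only [List.length_cons] at hn ⊢; omega) (a :: u') (b :: v') w' rfl
        have ihE := ih (u'.length + (b :: v').length + w'.length)
          (by simp only [List.length_cons] at hn ⊢; omega) u' (b :: v') w' rfl
        have ihF := ih ((a :: u').length + v'.length + w'.length)
          (by simp only [List.length_cons] at hn ⊢; omega) (a :: u') v' w' rfl
        have ihG := ih (u'.length + v'.length + w'.length)
          (by simp only [List.length_cons] at hn ⊢; omega) u' v' w' rfl
        have ecol : star (delta A (a :: u')) (star (delta A (b :: v')) (delta A w'))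
            = star (lcons A a P) (delta A w') + star (lcons A b Q) (delta A w')
              + brC a b • star (lcons A (brX a b) R) (delta A w') := by
          rw [← ihD, e1]
          simp only [map_add, map_smul, smul_add, LinearMap.add_apply, LinearMap.smul_apply]
        rw [e1]
        simp only [map_add, map_smul, smul_add, LinearMap.add_apply, LinearMap.smul_apply]
        rw [hrecL a P c w', hrecL b Q c w', hrecL (brX a b) R c w']
        rw [ihA, ihB, ihC, ihE, ihF, ihG]
        rw [e2]
        simp only [map_add, map_smul, smul_add, LinearMap.add_apply, LinearMap.smul_apply]
        rw [hrecR a u' b (star (delta A v') (delta A (c :: w'))),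
          hrecR a u' c (star (delta A (b :: v')) (delta A w')),
          hrecR a u' (brX b c) (star (delta A v') (delta A w'))]
        rw [ecol]
        simp only [map_add, map_smul, smul_add]
        have hbr := smul_lcons_congr (A := A) (hassoc a b c)
        rw [smul_smul (brC a b) (brC (brX a b) c), smul_smul (brC b c) (brC a (brX b c)), hbr]
        module

lemma assocL
    (hassoc3 : ∀ u v w : List X,
      star (star (delta A u) (delta A v)) (delta A w)
        = star (delta A u) (star (delta A v) (delta A w)))
    (u : List X) (p : List X →₀ A) (v : List X) :
    star (star (delta A u) p) (delta A v)
      = star (delta A u) (star p (delta A v)) := by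
  induction p using Finsupp.induction_linear with
  | zero => simp
  | add p q hp hq => simp only [map_add, LinearMap.add_apply, hp, hq]
  | single w c =>
      rw [single_eq_smul_delta, map_smul, map_smul, LinearMap.smul_apply, map_smul,
        LinearMap.smul_apply, hassoc3, map_smul]

lemma blocks_nil_of_zero (c : Composition 0) : c.blocks = [] := by
  cases hb : c.blocks with
  | nil => rfl
  | cons x l =>
      exfalso
      have h := c.blocks_sum
      rw [hb] at h
      have hx : 0 < x := c.blocks_pos (by rw [hb]; exact List.mem_cons_self)
      simp only [List.sum_cons] at h
      omega

lemma aStar_nil : aStar (A := A) (X := X) star [] = delta A [] := by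
  rw [aStar]
  have h1 : ∀ c : Composition (List.length ([] : List X)),
      ((-1 : A) ^ c.blocks.length) • prodStar star (splitWord c.blocks ([] : List X))
        = delta A [] := by
    intro c
    rw [blocks_nil_of_zero c]
    simp [splitWord, prodStar]
  rw [Finset.sum_congr rfl (fun c _ => h1 c), Finset.sum_const, Finset.card_univ]
  have : Fintype.card (Composition (List.length ([] : List X))) = 1 := by
    rw [show List.length ([] : List X) = 0 from rfl, composition_card]
    norm_num
  rw [this, one_smul]

lemma aStar_ne_nil (w : List X) (hw : w ≠ []) :
    aStar star w = -∑ i ∈ Finset.range w.length,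
      star (delta A (w.take (i + 1))) (aStar star (w.drop (i + 1))) := by
  have hlen : 0 < w.length := List.length_pos_iff.2 hw
  have step : ∀ i : ℕ, star (delta A (w.take (i+1))) (aStar star (w.drop (i+1)))
      = ∑ c : Composition ((w.drop (i+1)).length),
          ((-1:A)^c.blocks.length) • prodStar star (splitWord ((i+1) :: c.blocks) w) := by
    intro i
    rw [aStar, map_sum]
    refine Finset.sum_congr rfl fun c _ => ?_
    rw [map_smul]
    rfl
  have key : (∑ x ∈ (Finset.range w.length).sigma
        (fun i => (Finset.univ : Finset (Composition ((w.drop (i+1)).length)))),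
        ((-1:A)^(x.2.blocks.length+1)) • prodStar star (splitWord ((x.1+1) :: x.2.blocks) w))
      = ∑ c : Composition w.length,
        ((-1:A)^(c.blocks.length)) • prodStar star (splitWord c.blocks w) := by
    have hblocks : ∀ c : Composition w.length, c.blocks ≠ [] := by
      intro c h
      have := c.blocks_sum
      rw [h] at this
      simp at this
      omega
    have hhead : ∀ c : Composition w.length, 1 ≤ c.blocks.head! := by
      intro c
      exact c.blocks_pos (List.head!_mem_self (hblocks c))
    have hheadle : ∀ c : Composition w.length, c.blocks.head! ≤ w.length := by
      intro c
      have := List.single_le_sum (l := c.blocks) (fun x _ => Nat.zero_le x)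
        c.blocks.head! (List.head!_mem_self (hblocks c))
      rw [c.blocks_sum] at this
      exact this
    have hsum : ∀ c : Composition w.length,
        c.blocks.tail.sum = w.length - c.blocks.head! := by
      intro c
      have h1 := c.blocks_sum
      rw [← List.cons_head!_tail (hblocks c), List.sum_cons] at h1
      omega
    refine Finset.sum_bij'
      (fun x hx => (⟨(x.1+1) :: x.2.blocks, ?_, ?_⟩ : Composition w.length))
      (fun c hc => (⟨c.blocks.head! - 1,
        ⟨c.blocks.tail, ?_, ?_⟩⟩ :
          Σ i : ℕ, Composition ((w.drop (i+1)).length)))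
      ?_ ?_ ?_ ?_ ?_
    · -- blocks_pos for forward map
      intro j hj
      rcases List.mem_cons.1 hj with h | h
      · omega
      · exact x.2.blocks_pos h
    · -- blocks_sum for forward map
      have hx1 : x.1 ∈ Finset.range w.length := (Finset.mem_sigma.1 hx).1
      have hx2 : x.1 < w.length := Finset.mem_range.1 hx1
      have h3 := x.2.blocks_sum
      have h4 : (List.drop (x.1 + 1) w).length = w.length - (x.1 + 1) :=
        List.length_drop
      simp only [List.sum_cons]
      omega
    · -- blocks_pos for backward map
      intro j hj
      exact c.blocks_pos (List.mem_of_mem_tail hj)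
    · -- blocks_sum for backward map
      rw [List.length_drop, hsum c]
      have := hhead c
      congr 1
      omega
    · intro x hx
      exact Finset.mem_univ _
    · intro c hc
      rw [Finset.mem_sigma]
      refine ⟨Finset.mem_range.2 ?_, Finset.mem_univ _⟩
      change c.blocks.head! - 1 < w.length
      have := hhead c
      have := hheadle c
      omega
    · intro x hx
      rfl
    · intro c hc
      apply Composition.ext
      simp only
      have h0 := hhead c
      rw [show c.blocks.head! - 1 + 1 = c.blocks.head! by omega]
      exact List.cons_head!_tail (hblocks c)
    · intro x hx
      simp only [List.length_cons]
  rw [aStar, ← key, Finset.sum_sigma]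
  rw [← Finset.sum_neg_distrib]
  refine Finset.sum_congr rfl fun i _ => ?_
  rw [step i, ← Finset.sum_neg_distrib]
  refine Finset.sum_congr rfl fun c _ => ?_
  rw [pow_succ, mul_neg_one, neg_smul]

lemma triangle_swap {M : Type*} [AddCommMonoid M] (N : ℕ) (f : ℕ → ℕ → M) :
    ∑ i ∈ Finset.range N, ∑ j ∈ Finset.range (i + 1), f j (i - j)
      = ∑ j ∈ Finset.range N, ∑ k ∈ Finset.range (N - j), f j k := by
  rw [← Finset.sum_sigma (Finset.range N) (fun i => Finset.range (i + 1))
      (fun p => f p.2 (p.1 - p.2)),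
    ← Finset.sum_sigma (Finset.range N) (fun j => Finset.range (N - j))
      (fun p => f p.1 p.2)]
  refine Finset.sum_bij' (fun p _ => ⟨p.2, p.1 - p.2⟩) (fun p _ => ⟨p.1 + p.2, p.1⟩)
    ?_ ?_ ?_ ?_ ?_
  · intro p hp
    obtain ⟨i, j⟩ := p
    simp only [Finset.mem_sigma, Finset.mem_range] at hp ⊢
    omega
  · intro p hp
    obtain ⟨j, k⟩ := p
    simp only [Finset.mem_sigma, Finset.mem_range] at hp ⊢
    omega
  · intro p hp
    obtain ⟨i, j⟩ := p
    simp only [Finset.mem_sigma, Finset.mem_range] at hp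
    show (⟨j + (i - j), j⟩ : (_ : ℕ) × ℕ) = ⟨i, j⟩
    have h : j + (i - j) = i := by omega
    rw [h]
  · intro p hp
    obtain ⟨j, k⟩ := p
    simp only [Finset.mem_sigma, Finset.mem_range] at hp
    show (⟨j, j + k - j⟩ : (_ : ℕ) × ℕ) = ⟨j, k⟩
    have h : j + k - j = k := by omega
    rw [h]
  · intro p hp
    rfl

end Aux

/-- for `⋆ ∈ 𝒫`, `a_⋆` satisfies the left antipode identity
`Σ_(uv=w) a_⋆(u) ⋆ v = ε(w)·1`. -/
theorem stmt10 {A X : Type*} [CommRing A]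
    (star : (List X →₀ A) →ₗ[A] (List X →₀ A) →ₗ[A] (List X →₀ A))
    (brC : X → X → A) (brX : X → X → X)
    (hunitl : ∀ w : List X, star (delta A []) (delta A w) = delta A w)
    (hunitr : ∀ w : List X, star (delta A w) (delta A []) = delta A w)
    (hrec : ∀ (a b : X) (u v : List X),
      star (delta A (a :: u)) (delta A (b :: v)) =
        lcons A a (star (delta A u) (delta A (b :: v)))
          + lcons A b (star (delta A (a :: u)) (delta A v))
          + brC a b • lcons A (brX a b) (star (delta A u) (delta A v)))
    (hsym : ∀ a b : X, brC a b • delta A [brX a b] = brC b a • delta A [brX b a])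
    (hassoc : ∀ a b c : X,
      (brC a b * brC (brX a b) c) • delta A [brX (brX a b) c]
        = (brC b c * brC a (brX b c)) • delta A [brX a (brX b c)]) :
    ∀ w : List X,
      (∑ i ∈ Finset.range (w.length + 1),
          star (aStar star (w.take i)) (delta A (w.drop i)))
        = (match w with | [] => delta A ([] : List X) | _ => 0) := by
  have hassoc3 := assoc_delta star hunitl hunitr hrec hassoc
  suffices H : ∀ n (w : List X), w.length = n →
      (∑ i ∈ Finset.range (w.length + 1),
          star (aStar star (w.take i)) (delta A (w.drop i)))
        = (match w with | [] => delta A ([] : List X) | _ => 0) by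
    exact fun w => H w.length w rfl
  intro n
  induction n using Nat.strong_induction_on with
  | _ n ih =>
    intro w hw
    cases w with
    | nil =>
        simp only [List.length_nil, zero_add, Finset.sum_range_one, List.take_nil,
          List.drop_nil, aStar_nil star, hunitl]
    | cons x t =>
        show (∑ i ∈ Finset.range ((x :: t).length + 1),
            star (aStar star (List.take i (x :: t))) (delta A (List.drop i (x :: t)))) = 0
        have hvne : x :: t ≠ [] := List.cons_ne_nil x t
        generalize hgen : x :: t = v at hvne hw ⊢
        obtain ⟨m, hm⟩ : ∃ m, v.length = m + 1 :=
          ⟨v.length - 1, by have := List.length_pos_iff.2 hvne; omega⟩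
        rw [hm, Finset.sum_range_succ']
        have h00 : star (aStar star (List.take 0 v)) (delta A (List.drop 0 v))
            = delta A v := by
          rw [List.take_zero, List.drop_zero, aStar_nil star, hunitl]
        rw [h00]
        have hterm : ∀ i ∈ Finset.range (m + 1),
            star (aStar star (List.take (i + 1) v)) (delta A (List.drop (i + 1) v))
            = -∑ j ∈ Finset.range (i + 1),
                star (delta A (List.take (j + 1) v))
                  (star (aStar star (List.take (i - j) (List.drop (j + 1) v)))
                    (delta A (List.drop (i - j) (List.drop (j + 1) v)))) := by
          intro i hi
          have hi' : i < m + 1 := Finset.mem_range.1 hi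
          have htne : List.take (i + 1) v ≠ [] := by
            intro h
            have h2 := congrArg List.length h
            rw [List.length_take] at h2
            have h3 := List.length_pos_iff.2 hvne
            simp only [List.length_nil] at h2
            omega
          rw [aStar_ne_nil star _ htne]
          have hlt : (List.take (i + 1) v).length = i + 1 := by
            rw [List.length_take]; omega
          rw [hlt]
          rw [map_neg, LinearMap.neg_apply, map_sum, LinearMap.coe_sum,
            Finset.sum_apply]
          refine congrArg Neg.neg (Finset.sum_congr rfl fun j hj => ?_)
          have hji : j < i + 1 := Finset.mem_range.1 hj
          have e1 : List.take (j + 1) (List.take (i + 1) v) = List.take (j + 1) v := by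
            rw [List.take_take]; congr 1; omega
          have e2 : List.drop (j + 1) (List.take (i + 1) v)
              = List.take (i - j) (List.drop (j + 1) v) := by
            rw [List.drop_take]; congr 1; omega
          have e3 : List.drop (i + 1) v
              = List.drop (i - j) (List.drop (j + 1) v) := by
            rw [List.drop_drop]; congr 1; omega
          rw [e1, e2, e3, assocL star hassoc3]
        rw [Finset.sum_congr rfl hterm, Finset.sum_neg_distrib]
        have hswap : (∑ i ∈ Finset.range (m + 1), ∑ j ∈ Finset.range (i + 1),
              star (delta A (List.take (j + 1) v))
                (star (aStar star (List.take (i - j) (List.drop (j + 1) v)))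
                  (delta A (List.drop (i - j) (List.drop (j + 1) v)))))
            = ∑ j ∈ Finset.range (m + 1), ∑ k ∈ Finset.range (m + 1 - j),
                star (delta A (List.take (j + 1) v))
                  (star (aStar star (List.take k (List.drop (j + 1) v)))
                    (delta A (List.drop k (List.drop (j + 1) v)))) :=
          triangle_swap (m + 1) (fun j k =>
            star (delta A (List.take (j + 1) v))
              (star (aStar star (List.take k (List.drop (j + 1) v)))
                (delta A (List.drop k (List.drop (j + 1) v)))))
        rw [hswap]
        have hj : ∀ j ∈ Finset.range (m + 1),
            (∑ k ∈ Finset.range (m + 1 - j),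
                star (delta A (List.take (j + 1) v))
                  (star (aStar star (List.take k (List.drop (j + 1) v)))
                    (delta A (List.drop k (List.drop (j + 1) v)))))
            = if j = m then delta A v else 0 := by
          intro j hjm
          have hjm' : j < m + 1 := Finset.mem_range.1 hjm
          rw [← map_sum]
          have hlenj : (List.drop (j + 1) v).length = m - j := by
            rw [List.length_drop]; omega
          have hrange : m + 1 - j = (List.drop (j + 1) v).length + 1 := by omega
          rw [hrange, ih ((List.drop (j + 1) v).length) (by omega) (List.drop (j + 1) v) rfl]
          by_cases hcase : j = m
          · subst hcase
            have hdrop : List.drop (j + 1) v = [] := by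
              apply List.drop_eq_nil_of_le; omega
            rw [hdrop]
            have htake : List.take (j + 1) v = v := by
              rw [← hm, List.take_length]
            rw [if_pos rfl]
            show star (delta A (List.take (j + 1) v)) (delta A []) = delta A v
            rw [hunitr, htake]
          · have hne : List.drop (j + 1) v ≠ [] := by
              intro h
              have h2 := congrArg List.length h
              rw [hlenj] at h2
              simp at h2
              omega
            rw [if_neg hcase]
            cases hd : List.drop (j + 1) v with
            | nil => exact absurd hd hne
            | cons y ys => rw [map_zero]
        rw [Finset.sum_congr rfl hj, Finset.sum_ite_eq' (Finset.range (m + 1)) m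
          (fun _ => delta A v), if_pos (Finset.mem_range.2 (by omega))]
        exact neg_add_cancel _
end
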